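/- The partial sums ∑_{k=1}^{m} ζ(2k)/k satisfy ∑_{k=1}^{m} ζ(2k)/k = log(2m) + γ + O(1/m) as m → ∞; precisely, the quantity m·( ∑_{k=1}^{m} ζ(2k)/k − log(2m) − γ ) remains bounded as the positive integer m tends to infinity. -/

import Mathlib

open Filter

/-- The Riemann zeta value `ζ(s) = ∑_{n ≥ 1} n^{−s}` for a natural exponent `s`. -/
noncomputable def zetaSum (s : ℕ) : ℝ := ∑' n : ℕ, 1 / ((n : ℝ) + 1) ^ s

open Real

namespace ZHSA


noncomputable def a (n : ℕ) : ℝ := (((n : ℝ) + 2) ^ 2)⁻¹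

lemma a_pos (n : ℕ) : 0 < a n := by unfold a; positivity

lemma a_le (n : ℕ) : a n ≤ 4⁻¹ := by
  unfold a
  rw [inv_le_inv₀ (by positivity) (by norm_num)]
  nlinarith [Nat.cast_nonneg (α := ℝ) n]

lemma a_lt_one (n : ℕ) : a n < 1 := lt_of_le_of_lt (a_le n) (by norm_num)

lemma hasSum_t : HasSum (fun n : ℕ => ((n : ℝ) + 1)⁻¹ - ((n : ℝ) + 2)⁻¹) 1 := by
  rw [hasSum_iff_tendsto_nat_of_nonneg]
  · have : ∀ N : ℕ, ∑ i ∈ Finset.range N, (((i : ℝ) + 1)⁻¹ - ((i : ℝ) + 2)⁻¹)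
        = 1 - ((N : ℝ) + 1)⁻¹ := by
      intro N
      have h := Finset.sum_range_sub' (fun i : ℕ => ((i : ℝ) + 1)⁻¹) N
      have h2 : ∑ i ∈ Finset.range N, (((i : ℝ) + 1)⁻¹ - ((i : ℝ) + 2)⁻¹)
          = ∑ x ∈ Finset.range N,
            ((fun i : ℕ => ((i : ℝ) + 1)⁻¹) x - (fun i : ℕ => ((i : ℝ) + 1)⁻¹) (x + 1)) := by
        apply Finset.sum_congr rfl
        intro i _
        push_cast
        ring
      rw [h2, h]
      norm_num
    simp only [this]
    have h1 : Tendsto (fun N : ℕ => ((N : ℝ) + 1)⁻¹) atTop (nhds 0) :=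
      tendsto_one_div_add_atTop_nhds_zero_nat.congr (by intro n; rw [one_div])
    simpa using (tendsto_const_nhds (x := (1:ℝ))).sub h1
  · intro i
    have : ((i : ℝ) + 2)⁻¹ ≤ ((i : ℝ) + 1)⁻¹ := by
      apply inv_anti₀ <;> nlinarith [Nat.cast_nonneg (α := ℝ) i]
    linarith

lemma summable_a : Summable a :=
  hasSum_t.summable.of_nonneg_of_le (fun n => (a_pos n).le)
    (fun n => by
      unfold a
      have h1 : (0:ℝ) < (n : ℝ) + 1 := by positivity
      have h2 : (0:ℝ) < (n : ℝ) + 2 := by positivity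
      have heq : ((n:ℝ)+1)⁻¹ - ((n:ℝ)+2)⁻¹ = (((n:ℝ)+1)*((n:ℝ)+2))⁻¹ := by
        rw [inv_sub_inv h1.ne' h2.ne']
        norm_num
      rw [heq, inv_le_inv₀ (by positivity) (by positivity)]
      nlinarith)

lemma tsum_a_le : ∑' n, a n ≤ 1 := by
  rw [← hasSum_t.tsum_eq]
  exact Summable.tsum_le_tsum (fun n => by
      unfold a
      have h1 : (0:ℝ) < (n : ℝ) + 1 := by positivity
      have h2 : (0:ℝ) < (n : ℝ) + 2 := by positivity
      have heq : ((n:ℝ)+1)⁻¹ - ((n:ℝ)+2)⁻¹ = (((n:ℝ)+1)*((n:ℝ)+2))⁻¹ := by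
        rw [inv_sub_inv h1.ne' h2.ne']
        norm_num
      rw [heq, inv_le_inv₀ (by positivity) (by positivity)]
      nlinarith) summable_a hasSum_t.summable

noncomputable def F (n k : ℕ) : ℝ := a n ^ (k + 1) / (k + 1)

lemma hasSum_F (n : ℕ) : HasSum (F n) (-Real.log (1 - a n)) :=
  hasSum_pow_div_log_of_abs_lt_one (by rw [abs_of_pos (a_pos n)]; exact a_lt_one n)

noncomputable def g (n : ℕ) : ℝ := Real.log ((n : ℝ) + 2) - Real.log ((n : ℝ) + 1)

lemma neg_log_eq (n : ℕ) : -Real.log (1 - a n) = g n - g (n + 1) := by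
  have h1 : (0:ℝ) < (n : ℝ) + 1 := by positivity
  have h2 : (0:ℝ) < (n : ℝ) + 2 := by positivity
  have h3 : (0:ℝ) < (n : ℝ) + 3 := by positivity
  have key : 1 - a n = ((n : ℝ) + 1) * ((n : ℝ) + 3) / ((n : ℝ) + 2) ^ 2 := by
    unfold a; field_simp; ring
  rw [key, Real.log_div (by positivity) (by positivity), Real.log_mul h1.ne' h3.ne',
    Real.log_pow]
  unfold g
  push_cast
  ring

lemma g_nonneg (n : ℕ) : 0 ≤ g n := by
  unfold g
  apply sub_nonneg.mpr
  apply Real.log_le_log (by positivity)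
  linarith

lemma g_le (n : ℕ) : g n ≤ ((n : ℝ) + 1)⁻¹ := by
  unfold g
  have h1 : (0:ℝ) < (n : ℝ) + 1 := by positivity
  rw [← Real.log_div (by positivity) h1.ne']
  have := Real.log_le_sub_one_of_pos (show (0:ℝ) < ((n:ℝ)+2)/((n:ℝ)+1) by positivity)
  have h2 : ((n:ℝ)+2)/((n:ℝ)+1) - 1 = ((n:ℝ)+1)⁻¹ := by
    field_simp
    norm_num
  linarith

lemma hasSum_neg_log : HasSum (fun n : ℕ => -Real.log (1 - a n)) (Real.log 2) := by
  rw [hasSum_iff_tendsto_nat_of_nonneg]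
  · have heq : ∀ N : ℕ, ∑ i ∈ Finset.range N, -Real.log (1 - a i) = g 0 - g N := by
      intro N
      rw [← Finset.sum_range_sub' g N]
      exact Finset.sum_congr rfl (fun i _ => neg_log_eq i)
    simp only [heq]
    have hg0 : g 0 = Real.log 2 := by unfold g; norm_num
    have hgto : Tendsto g atTop (nhds 0) := by
      apply squeeze_zero g_nonneg g_le
      exact tendsto_one_div_add_atTop_nhds_zero_nat.congr (by intro n; rw [one_div])
    rw [← hg0]
    simpa using (tendsto_const_nhds (x := g 0)).sub hgto
  · intro i
    rw [neg_nonneg]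
    apply Real.log_nonpos
    · linarith [a_lt_one i]
    · linarith [a_pos i]

lemma F_nonneg (n k : ℕ) : 0 ≤ F n k := by unfold F a; positivity

lemma summable_uncurry : Summable (Function.uncurry F) := by
  apply (summable_prod_of_nonneg (f := Function.uncurry F) (fun p => F_nonneg p.1 p.2)).mpr
  constructor
  · exact fun n => (hasSum_F n).summable
  · apply hasSum_neg_log.summable.congr
    intro n
    exact ((hasSum_F n).tsum_eq).symm

noncomputable def S (k : ℕ) : ℝ := ∑' n : ℕ, F n k

lemma summable_S : Summable S := summable_uncurry.prod_symm.prod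

lemma hasSum_S : HasSum S (Real.log 2) := by
  rw [summable_S.hasSum_iff]
  unfold S
  rw [Summable.tsum_comm summable_uncurry]
  rw [← hasSum_neg_log.tsum_eq]
  exact tsum_congr (fun n => (hasSum_F n).tsum_eq)

lemma S_nonneg (k : ℕ) : 0 ≤ S k := tsum_nonneg (fun n => F_nonneg n k)

lemma S_le (k : ℕ) : S k ≤ (4:ℝ)⁻¹ ^ k := by
  unfold S
  calc ∑' n : ℕ, F n k ≤ ∑' n : ℕ, a n * (4:ℝ)⁻¹ ^ k := by
        apply Summable.tsum_le_tsum _ (summable_uncurry.prod_symm.prod_factor k) (summable_a.mul_right _)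
        intro n
        unfold F
        have hk1 : (1:ℝ) ≤ (k:ℝ) + 1 := by have := Nat.cast_nonneg (α := ℝ) k; linarith
        calc a n ^ (k + 1) / ((k:ℝ) + 1) ≤ a n ^ (k + 1) :=
              div_le_self (pow_nonneg (a_pos n).le _) hk1
          _ = a n * a n ^ k := by ring
          _ ≤ a n * (4:ℝ)⁻¹ ^ k := by
              apply mul_le_mul_of_nonneg_left _ (a_pos n).le
              exact pow_le_pow_left₀ (a_pos n).le (a_le n) k
    _ = (∑' n : ℕ, a n) * (4:ℝ)⁻¹ ^ k := tsum_mul_right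
    _ ≤ 1 * (4:ℝ)⁻¹ ^ k := by
        apply mul_le_mul_of_nonneg_right tsum_a_le (by positivity)
    _ = (4:ℝ)⁻¹ ^ k := one_mul _

lemma tail_le (m : ℕ) : ∑' k : ℕ, S (k + m) ≤ 2 * (4:ℝ)⁻¹ ^ m := by
  have hgeo : Summable (fun k : ℕ => (4:ℝ)⁻¹ ^ (k + m)) := by
    apply Summable.comp_injective (summable_geometric_of_lt_one (by norm_num) (by norm_num))
    exact fun x y h => by omega
  calc ∑' k : ℕ, S (k + m) ≤ ∑' k : ℕ, (4:ℝ)⁻¹ ^ (k + m) := by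
        apply Summable.tsum_le_tsum (fun k => S_le (k + m)) _ hgeo
        exact ((summable_nat_add_iff m).mpr summable_S)
    _ = (4:ℝ)⁻¹ ^ m * ∑' k : ℕ, (4:ℝ)⁻¹ ^ k := by
        rw [← tsum_mul_left]
        exact tsum_congr (fun k => by rw [pow_add]; ring)
    _ ≤ (4:ℝ)⁻¹ ^ m * 2 := by
        apply mul_le_mul_of_nonneg_left _ (by positivity)
        rw [tsum_geometric_of_lt_one (by norm_num) (by norm_num)]
        norm_num
    _ = 2 * (4:ℝ)⁻¹ ^ m := by ring


lemma a_def (n : ℕ) : a n = (((n : ℝ) + 2) ^ 2)⁻¹ := rfl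

lemma summable_F_n (k : ℕ) : Summable (fun n => F n k) :=
  summable_uncurry.prod_symm.prod_factor k

lemma summable_inv_sq : Summable (fun n : ℕ => (((n : ℝ) + 1) ^ 2)⁻¹) := by
  have h : Summable (fun n : ℕ => 1 / (n : ℝ) ^ 2) := summable_one_div_nat_pow.mpr (by norm_num)
  have h2 := (summable_nat_add_iff (f := fun n : ℕ => 1 / (n : ℝ) ^ 2) 1).mpr h
  apply h2.congr
  intro n
  push_cast
  rw [one_div]

lemma summable_zeta (k : ℕ) : Summable (fun n : ℕ => 1 / ((n : ℝ) + 1) ^ (2 * (k + 1))) := by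
  apply summable_inv_sq.of_nonneg_of_le (fun n => by positivity)
  intro n
  rw [one_div]
  apply inv_anti₀ (by positivity)
  calc ((n : ℝ) + 1) ^ 2 ≤ ((n : ℝ) + 1) ^ (2 * (k + 1)) := by
        apply pow_le_pow_right₀ (by linarith [Nat.cast_nonneg (α := ℝ) n])
        omega

lemma summable_pow (k : ℕ) : Summable (fun n : ℕ => a n ^ (k + 1)) := by
  apply ((summable_F_n k).mul_right ((k : ℝ) + 1)).congr
  intro n
  unfold F
  field_simp

lemma zetaSum_div (k : ℕ) :
    zetaSum (2 * (k + 1)) / ((k : ℝ) + 1) = ((k : ℝ) + 1)⁻¹ + S k := by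
  have hz : zetaSum (2 * (k + 1)) = 1 + ∑' n : ℕ, a n ^ (k + 1) := by
    unfold zetaSum
    rw [Summable.tsum_eq_zero_add (summable_zeta k)]
    congr 1
    · norm_num
    · apply tsum_congr
      intro n
      rw [a_def, ← inv_pow, ← pow_mul, one_div, ← inv_pow]
      push_cast
      ring_nf
  have hS : S k = (∑' n : ℕ, a n ^ (k + 1)) / ((k : ℝ) + 1) := by
    unfold S F
    rw [tsum_div_const]
  rw [hz, hS]
  have : ((k : ℝ) + 1) ≠ 0 := by positivity
  field_simp

end ZHSA

open ZHSA in
/-- `∑_{k=1}^{m} ζ(2k)/k = log(2m) + γ + O(1/m)` as `m → ∞`; precisely, the quantity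
`m·(∑_{k=1}^{m} ζ(2k)/k − log(2m) − γ)` remains bounded as the positive integer `m` tends
to infinity. -/
theorem zeta_harmonic_sum_asymptotics :
    ∃ C : ℝ, ∀ᶠ m : ℕ in atTop,
      |(m : ℝ) * ((∑ k ∈ Finset.Icc 1 m, zetaSum (2 * k) / (k : ℝ)) -
        Real.log (2 * m) - Real.eulerMascheroniConstant)| ≤ C := by
  refine ⟨3, ?_⟩
  filter_upwards [eventually_ge_atTop 1] with m hm
  have hm0 : (0 : ℝ) < m := by exact_mod_cast hm
  -- rewrite the partial sum
  have hsum : ∑ k ∈ Finset.Icc 1 m, zetaSum (2 * k) / (k : ℝ)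
      = (harmonic m : ℝ) + ∑ j ∈ Finset.range m, S j := by
    rw [← Finset.Ico_add_one_right_eq_Icc, Finset.sum_Ico_eq_sum_range]
    rw [show m + 1 - 1 = m from rfl]
    have : ∀ j ∈ Finset.range m, zetaSum (2 * (1 + j)) / ((1 + j : ℕ) : ℝ)
        = ((j : ℝ) + 1)⁻¹ + S j := by
      intro j _
      have h1 : (1 + j) = (j + 1) := by omega
      rw [h1]
      have h2 : (((j + 1 : ℕ)) : ℝ) = (j : ℝ) + 1 := by push_cast; ring
      rw [h2]
      exact zetaSum_div j
    rw [Finset.sum_congr rfl this, Finset.sum_add_distrib]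
    congr 1
    rw [harmonic]
    push_cast
    rfl
  have htail := Summable.sum_add_tsum_nat_add (f := S) m summable_S
  rw [hasSum_S.tsum_eq] at htail
  set t : ℝ := ∑' k : ℕ, S (k + m) with ht
  have htail' : ∑ j ∈ Finset.range m, S j = Real.log 2 - t := by
    rw [← htail]; ring
  have ht0 : 0 ≤ t := tsum_nonneg (fun k => S_nonneg _)
  have ht2 : (m : ℝ) * t ≤ 2 := by
    have h1 : t ≤ 2 * (4:ℝ)⁻¹ ^ m := tail_le m
    have h2 : (m : ℝ) ≤ 4 ^ m := by
      exact_mod_cast (Nat.lt_pow_self (n := m) (by norm_num : 1 < 4)).le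
    have h3 : (m : ℝ) * (4:ℝ)⁻¹ ^ m ≤ 1 := by
      rw [inv_pow, mul_inv_le_iff₀ (by positivity), one_mul]
      exact h2
    nlinarith
  -- Euler–Mascheroni bounds
  have hlow := Real.eulerMascheroniSeq_lt_eulerMascheroniConstant m
  have hhigh := Real.eulerMascheroniConstant_lt_eulerMascheroniSeq' m
  rw [Real.eulerMascheroniSeq] at hlow
  rw [Real.eulerMascheroniSeq', if_neg (by omega)] at hhigh
  set γ := Real.eulerMascheroniConstant
  set A : ℝ := (harmonic m : ℝ) - Real.log m - γ with hA
  have hA0 : 0 < A := by rw [hA]; linarith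
  have hA1 : (m : ℝ) * A ≤ 1 := by
    have hlog : Real.log ((m : ℝ) + 1) - Real.log m ≤ (m : ℝ)⁻¹ := by
      rw [← Real.log_div (by positivity) hm0.ne']
      have := Real.log_le_sub_one_of_pos (show (0:ℝ) < ((m:ℝ)+1)/(m:ℝ) by positivity)
      have heq : ((m:ℝ)+1)/(m:ℝ) - 1 = (m:ℝ)⁻¹ := by field_simp; ring
      linarith
    have : A ≤ (m : ℝ)⁻¹ := by rw [hA]; linarith
    calc (m : ℝ) * A ≤ (m : ℝ) * (m : ℝ)⁻¹ := by
          apply mul_le_mul_of_nonneg_left this hm0.le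
      _ = 1 := mul_inv_cancel₀ hm0.ne'
  -- log(2m) = log 2 + log m
  have hlog2m : Real.log (2 * (m : ℝ)) = Real.log 2 + Real.log m :=
    Real.log_mul two_ne_zero hm0.ne'
  have key : (∑ k ∈ Finset.Icc 1 m, zetaSum (2 * k) / (k : ℝ)) -
      Real.log (2 * m) - γ = A - t := by
    rw [hsum, htail', hlog2m, hA]
    push_cast
    ring
  rw [key]
  rw [abs_le]
  have hmA : 0 ≤ (m : ℝ) * A := by positivity
  have hmt : 0 ≤ (m : ℝ) * t := by positivity
  constructor <;> nlinarith
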